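/- Let $\mathcal{A}=\{e_1,\dots,e_s\}\cup\{v_1,\dots,v_q\}\subset\mathbb{N}^s$ where each $v_i$ has coordinate sum $2$. If $\alpha\in\mathbb{N}^s\setminus\{0\}$ and $\beta_1,\dots,\beta_k\in\mathcal{A}$ satisfy $\sum_{i=1}^k\beta_i\ge\alpha$ (componentwise), then there exist $\gamma_1,\dots,\gamma_\ell\in\mathcal{A}$ with $\alpha=\sum_{i=1}^\ell \gamma_i$ and $\ell\le k$. -/

import Mathlib

lemma decompose_aux {s : ℕ} (A : Set (Fin s → ℕ))
    (hunit : ∀ j : Fin s, (Pi.single j 1 : Fin s → ℕ) ∈ A)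
    (hmem : ∀ b ∈ A, (∃ i, b = Pi.single i 1) ∨ (∑ x, b x) = 2) :
    ∀ n (α : Fin s → ℕ), (∑ x, α x) = n → α ≠ 0 →
    ∀ (B : Multiset (Fin s → ℕ)), (∀ b ∈ B, b ∈ A) →
    (∀ x, α x ≤ (B.map (· x)).sum) →
    ∃ C : Multiset (Fin s → ℕ), (∀ c ∈ C, c ∈ A) ∧ Multiset.card C ≤ Multiset.card B ∧
      ∀ x, α x = (C.map (· x)).sum := by
  intro n
  induction n using Nat.strong_induction_on with
  | _ n ih =>
    intro α hn hα B hB hge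
    obtain ⟨j, hj⟩ : ∃ j, 0 < α j := by
      by_contra h
      push_neg at h
      exact hα (funext fun x => Nat.le_zero.mp (h x))
    obtain ⟨b, hbB, hbj⟩ : ∃ b ∈ B, 0 < b j := by
      by_contra h
      push_neg at h
      have hz : (B.map (· j)).sum = 0 := by
        apply Multiset.sum_eq_zero
        intro y hy
        obtain ⟨c, hc, rfl⟩ := Multiset.mem_map.mp hy
        exact Nat.le_zero.mp (h c hc)
      have hgj := hge j
      rw [hz] at hgj
      exact Nat.lt_irrefl 0 (Nat.lt_of_lt_of_le hj hgj)
    obtain ⟨B', hB'def⟩ : ∃ B', B' = B.erase b := ⟨_, rfl⟩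
    have hcons : B = b ::ₘ B' := by rw [hB'def]; exact (Multiset.cons_erase hbB).symm
    have hsum : ∀ x, (B.map (· x)).sum = b x + (B'.map (· x)).sum := by
      intro x
      conv_lhs => rw [hcons]
      simp
    have key : ∀ x, α x ≤ b x + (B'.map (· x)).sum := by
      intro x
      rw [← hsum x]
      exact hge x
    have hcard : Multiset.card B = Multiset.card B' + 1 := by
      rw [hcons]; simp
    -- choose d
    obtain ⟨d, hdA, hdle, hdj, hB'ge⟩ :
        ∃ d, d ∈ A ∧ (∀ x, d x ≤ α x) ∧ 0 < d j ∧
          (∀ x, α x - d x ≤ (B'.map (· x)).sum) := by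
      by_cases hle : ∀ x, b x ≤ α x
      · refine ⟨b, hB b hbB, hle, hbj, fun x => ?_⟩
        have h1 := key x
        generalize (B'.map (· x)).sum = S' at h1 ⊢
        omega
      · push_neg at hle
        obtain ⟨x₀, hx₀⟩ := hle
        have hsingle_le : ∀ x, (Pi.single j 1 : Fin s → ℕ) x ≤ α x := by
          intro x
          by_cases hxj : x = j
          · subst hxj; rw [Pi.single_eq_same]; exact hj
          · rw [Pi.single_eq_of_ne hxj]; exact Nat.zero_le _
        have hb2 : (∑ x, b x) = 2 := by
          rcases hmem b (hB b hbB) with ⟨i, rfl⟩ | h2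
          · have hij : i = j := by
              by_contra hne
              rw [Pi.single_eq_of_ne (Ne.symm hne)] at hbj
              omega
            subst hij
            exact absurd (hsingle_le x₀) (by omega)
          · exact h2
        have hble : ∀ x, b x ≤ 2 := by
          intro x
          have := Finset.single_le_sum (f := b) (fun _ _ => Nat.zero_le _)
            (Finset.mem_univ x)
          omega
        have hpair : ∀ x y, x ≠ y → b x + b y ≤ 2 := by
          intro x y hne
          have hsub : ∑ z ∈ ({x, y} : Finset (Fin s)), b z ≤ ∑ z, b z :=
            Finset.sum_le_sum_of_subset (Finset.subset_univ _)
          rw [Finset.sum_pair hne] at hsub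
          omega
        have htriple : ∀ x y z, x ≠ y → x ≠ z → y ≠ z → b x + b y + b z ≤ 2 := by
          intro x y z hxy hxz hyz
          have hsub : ∑ w ∈ ({x, y, z} : Finset (Fin s)), b w ≤ ∑ w, b w :=
            Finset.sum_le_sum_of_subset (Finset.subset_univ _)
          rw [Finset.sum_insert (by simp [hxy, hxz]), Finset.sum_pair hyz] at hsub
          omega
        refine ⟨Pi.single j 1, hunit j, hsingle_le, by simp, fun x => ?_⟩
        have h1 := key x
        generalize (B'.map (· x)).sum = S' at h1 ⊢
        have hbx2 := hble x
        have hbx0 := hble x₀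
        by_cases hxj : x = j
        · subst hxj
          rw [Pi.single_eq_same]
          by_cases hbx1 : b x ≤ 1
          · omega
          · by_cases hx0 : x₀ = x
            · subst hx0; omega
            · have := hpair x x₀ (fun h => hx0 h.symm)
              omega
        · rw [Pi.single_eq_of_ne hxj]
          by_cases hbx : b x = 0
          · omega
          · have hpjx := hpair j x (fun h => hxj h.symm)
            by_cases hx0j : x₀ = j
            · subst hx0j; omega
            · by_cases hx0x : x₀ = x
              · subst hx0x; omega
              · have := htriple j x x₀ (fun h => hxj h.symm)
                  (fun h => hx0j h.symm) (fun h => hx0x h.symm)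
                omega
    obtain ⟨α', hα'def⟩ : ∃ α' : Fin s → ℕ, α' = fun x => α x - d x := ⟨_, rfl⟩
    have hα'x : ∀ x, α' x = α x - d x := fun x => by rw [hα'def]
    have hαsplit : ∀ x, α x = d x + α' x := by
      intro x; have := hdle x; rw [hα'x x]; omega
    by_cases hα'0 : α' = 0
    · have hαd : α = d := by
        funext x
        have h0 : α' x = 0 := by rw [hα'0]; rfl
        rw [hα'x x] at h0
        have := hdle x
        omega
      refine ⟨{d}, by simpa using hdA, ?_, fun x => by simp [hαd]⟩
      simp [hcard]
    · have hdpos : 0 < ∑ x, d x :=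
        lt_of_lt_of_le hdj (Finset.single_le_sum (fun _ _ => Nat.zero_le _)
          (Finset.mem_univ j))
      have hαpos : 0 < ∑ x, α x :=
        lt_of_lt_of_le hj (Finset.single_le_sum (fun _ _ => Nat.zero_le _)
          (Finset.mem_univ j))
      have hsum_split : ∑ x, α x = (∑ x, d x) + ∑ x, α' x := by
        rw [← Finset.sum_add_distrib]
        exact Finset.sum_congr rfl fun x _ => hαsplit x
      have hlt : (∑ x, α' x) < n := by omega
      obtain ⟨C', hC'A, hC'card, hC'sum⟩ := ih _ hlt α' rfl hα'0 B'
        (fun c hc => hB c (Multiset.mem_of_mem_erase (hB'def ▸ hc)))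
        (fun x => by rw [hα'x x]; exact hB'ge x)
      refine ⟨d ::ₘ C', ?_, ?_, ?_⟩
      · intro c hc
        rcases Multiset.mem_cons.mp hc with rfl | hc
        · exact hdA
        · exact hC'A c hc
      · simp only [Multiset.card_cons]
        omega
      · intro x
        simp only [Multiset.map_cons, Multiset.sum_cons]
        rw [hαsplit x, hC'sum x]

theorem decompose_below_sum
    {s q : ℕ} (v : Fin q → Fin s → ℕ) (hdeg : ∀ i, (∑ k, v i k) = 2)
    (A : Set (Fin s → ℕ))
    (hA : A = (Set.range fun i : Fin s => (Pi.single i 1 : Fin s → ℕ)) ∪ Set.range v)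
    (α : Fin s → ℕ) (hα : α ≠ 0)
    (k : ℕ) (β : Fin k → (Fin s → ℕ)) (hβ : ∀ i, β i ∈ A)
    (hge : ∀ j : Fin s, α j ≤ ∑ i, β i j) :
    ∃ (l : ℕ) (γ : Fin l → (Fin s → ℕ)),
      l ≤ k ∧ (∀ i, γ i ∈ A) ∧ ∀ j : Fin s, α j = ∑ i, γ i j := by
  have hunit : ∀ j : Fin s, (Pi.single j 1 : Fin s → ℕ) ∈ A := by
    intro j; rw [hA]; exact Or.inl ⟨j, rfl⟩
  have hmem : ∀ b ∈ A, (∃ i, b = Pi.single i 1) ∨ (∑ x, b x) = 2 := by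
    intro b hb
    rw [hA] at hb
    rcases hb with ⟨i, rfl⟩ | ⟨i, rfl⟩
    · exact Or.inl ⟨i, rfl⟩
    · exact Or.inr (hdeg i)
  obtain ⟨B, hBdef⟩ : ∃ B : Multiset (Fin s → ℕ), B = Finset.univ.val.map β := ⟨_, rfl⟩
  have hBA : ∀ b ∈ B, b ∈ A := by
    intro b hb
    rw [hBdef] at hb
    obtain ⟨i, _, rfl⟩ := Multiset.mem_map.mp hb
    exact hβ i
  have hBsum : ∀ x, (B.map (· x)).sum = ∑ i, β i x := by
    intro x
    rw [hBdef, Multiset.map_map]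
    rfl
  have hBcard : Multiset.card B = k := by rw [hBdef]; simp
  obtain ⟨C, hCA, hCcard, hCsum⟩ := decompose_aux A hunit hmem (∑ x, α x) α rfl hα B hBA
    (fun x => by rw [hBsum x]; exact hge x)
  refine ⟨C.toList.length, C.toList.get, ?_, ?_, ?_⟩
  · rw [Multiset.length_toList]; omega
  · intro i
    exact hCA _ (by rw [← Multiset.mem_toList]; exact List.get_mem _ _)
  · intro x
    rw [hCsum x]
    have h1 : C.map (· x) = ↑(C.toList.map (· x)) := by
      conv_lhs => rw [← Multiset.coe_toList C]
      rfl
    rw [h1, Multiset.sum_coe]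
    have h2 : C.toList.map (· x) = List.ofFn (fun i => C.toList.get i x) := by
      conv_lhs => rw [← List.ofFn_get C.toList]
      rw [List.map_ofFn]
      rfl
    rw [h2, List.sum_ofFn]
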